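/- Let V be a finite set of N nodes partitioned into two sensitive groups S₀ and S₁ of sizes N₀ ≥ 1 and N₁ ≥ 1, and fix α > 0. For F : V → ℝ^d, define the simplified fairness regularizer h̃_f(F) = −(2/(N₀N₁))·Σ_{i∈S₀} Σ_{j∈S₁} k(F_i, F_j). Define P̃(F) ∈ ℝ^{V×V} by: for i ≠ j, P̃(F)_{ij} = k(F_i, F_j)/(N₀N₁) if i and j lie in different groups and P̃(F)_{ij} = 0 if i and j lie in the same group; P̃(F)_{ii} = −Σ_{m≠i} P̃(F)_{im}. Then for every node i, the negative gradient of h̃_f with respect to the row F_i satisfies −∇_{F_i} h̃_f(F) = 4α·Σ_{j∈V} P̃(F)_{ij}·F_j. -/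

import Mathlib

open Finset

/-- RBF kernel `k(x,y) = exp(-α‖x-y‖²)`. -/
noncomputable def ker {d : ℕ} (α : ℝ) (x y : EuclideanSpace ℝ (Fin d)) : ℝ :=
  Real.exp (-α * ‖x - y‖ ^ 2)

/-- The sensitive group `S_b`, where group membership is given by `grp`
(`false` encodes `S₀` and `true` encodes `S₁`). -/
def sgrp {V : Type*} [Fintype V] (grp : V → Bool) (b : Bool) : Finset V :=
  Finset.univ.filter (fun i => grp i = b)

/-- The simplified fairness regularizer
`h̃_f(F) = −(2/(N₀N₁))·Σ_{i∈S₀}Σ_{j∈S₁} k(F_i,F_j)`. -/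
noncomputable def hTilde {V : Type*} [Fintype V] {d : ℕ} (α : ℝ) (grp : V → Bool)
    (F : V → EuclideanSpace ℝ (Fin d)) : ℝ :=
  -(2 / (((sgrp grp false).card : ℝ) * ((sgrp grp true).card : ℝ))) *
    ∑ i ∈ sgrp grp false, ∑ j ∈ sgrp grp true, ker α (F i) (F j)

/-- Off-diagonal entries of `P̃(F)`: `0` if `i, j` lie in the same group, and
`k(F_i,F_j)/(N₀N₁)` if they lie in different groups. -/
noncomputable def Ptoff {V : Type*} [Fintype V] {d : ℕ} (α : ℝ) (grp : V → Bool)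
    (F : V → EuclideanSpace ℝ (Fin d)) (i j : V) : ℝ :=
  if grp i = grp j then 0
  else ker α (F i) (F j) / (((sgrp grp false).card : ℝ) * ((sgrp grp true).card : ℝ))

/-- The matrix `P̃(F)`: off-diagonal entries given by `Ptoff` and diagonal entries
`P̃(F)_{ii} = −Σ_{m≠i} P̃(F)_{im}`. -/
noncomputable def Ptmat {V : Type*} [Fintype V] [DecidableEq V] {d : ℕ} (α : ℝ)
    (grp : V → Bool) (F : V → EuclideanSpace ℝ (Fin d)) (i j : V) : ℝ :=
  if i = j then -∑ m ∈ Finset.univ.erase i, Ptoff α grp F i m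
  else Ptoff α grp F i j

lemma ker_symm {d : ℕ} (α : ℝ) (x y : EuclideanSpace ℝ (Fin d)) : ker α x y = ker α y x := by
  simp [ker, norm_sub_rev]

lemma hasGradientAt_ker {d : ℕ} (α : ℝ) (y p : EuclideanSpace ℝ (Fin d)) :
    HasGradientAt (fun x => ker α x y) ((-(2*α) * ker α p y) • (p - y)) p := by
  rw [hasGradientAt_iff_hasFDerivAt]
  have h1 : HasFDerivAt (fun x : EuclideanSpace ℝ (Fin d) => (inner ℝ (x - y) (x - y) : ℝ))
      ((2:ℝ) • (innerSL ℝ (p - y))) p := by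
    have h := ((hasFDerivAt_id p).sub_const y).inner ℝ ((hasFDerivAt_id p).sub_const y)
    refine h.congr_fderiv ?_
    ext v
    simp only [ContinuousLinearMap.smul_apply, innerSL_apply_apply, ContinuousLinearMap.comp_apply,
      ContinuousLinearMap.prod_apply, fderivInnerCLM_apply, ContinuousLinearMap.coe_id', id_eq,
      smul_eq_mul]
    rw [real_inner_comm]; ring
  have h2 : HasFDerivAt (fun x : EuclideanSpace ℝ (Fin d) => -α * ‖x - y‖ ^ 2)
      ((-α) • ((2:ℝ) • (innerSL ℝ (p - y)))) p := by
    have := h1.const_mul (-α)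
    simpa only [real_inner_self_eq_norm_sq] using this
  have h3 := (Real.hasDerivAt_exp (-α * ‖p - y‖ ^ 2)).comp_hasFDerivAt p h2
  refine h3.congr_fderiv ?_
  ext v
  simp [ker, inner_smul_left, InnerProductSpace.toDual_apply_apply]
  ring

lemma hasGradientAt_ker_sum {V : Type*} {d : ℕ} (s : Finset V) (α : ℝ)
    (G : V → EuclideanSpace ℝ (Fin d)) (p : EuclideanSpace ℝ (Fin d)) :
    HasGradientAt (fun x => ∑ m ∈ s, ker α x (G m))
      (∑ m ∈ s, (-(2*α) * ker α p (G m)) • (p - G m)) p := by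
  rw [hasGradientAt_iff_hasFDerivAt, map_sum]
  exact HasFDerivAt.fun_sum fun m _ => (hasGradientAt_ker α (G m) p).hasFDerivAt

lemma hasGradientAt_const_mul_add {d : ℕ} (c K : ℝ) {f : EuclideanSpace ℝ (Fin d) → ℝ}
    {g p : EuclideanSpace ℝ (Fin d)} (h : HasGradientAt f g p) :
    HasGradientAt (fun x => c * f x + K) (c • g) p := by
  rw [hasGradientAt_iff_hasFDerivAt, map_smul]
  exact (h.hasFDerivAt.const_mul c).add_const K


set_option maxHeartbeats 1000000 in
/-- For every node `i`, the negative gradient of `h̃_f` with respect to the row `F_i`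
satisfies `−∇_{F_i} h̃_f(F) = 4α·Σ_{j∈V} P̃(F)_{ij}·F_j`. -/
theorem stmt4 {V : Type*} [Fintype V] [DecidableEq V] {d : ℕ} {α : ℝ} (hα : 0 < α)
    (grp : V → Bool) (N₀ N₁ : ℕ)
    (hcard0 : (sgrp grp false).card = N₀) (hcard1 : (sgrp grp true).card = N₁)
    (hN₀ : 1 ≤ N₀) (hN₁ : 1 ≤ N₁)
    (F : V → EuclideanSpace ℝ (Fin d)) (i : V) :
    HasGradientAt (fun x : EuclideanSpace ℝ (Fin d) => hTilde α grp (Function.update F i x))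
      (-((4 * α) • ∑ j : V, Ptmat α grp F i j • F j)) (F i) := by
  classical
  obtain ⟨K, hK⟩ : ∃ K : ℝ, ∀ x, hTilde α grp (Function.update F i x)
      = -(2 / (((sgrp grp false).card : ℝ) * ((sgrp grp true).card : ℝ)))
          * (∑ m ∈ sgrp grp (!grp i), ker α x (F m)) + K := by
    cases hb : grp i with
    | false =>
      refine ⟨-(2 / (((sgrp grp false).card : ℝ) * ((sgrp grp true).card : ℝ)))
        * ∑ a ∈ (sgrp grp false).erase i, ∑ b ∈ sgrp grp true, ker α (F a) (F b), ?_⟩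
      intro x
      have hi : i ∈ sgrp grp false := by simp [sgrp, hb]
      have hne1 : ∀ b ∈ sgrp grp true, b ≠ i := by
        intro b hbm h; rw [h] at hbm; simp [sgrp, hb] at hbm
      have hsum : ∑ a ∈ sgrp grp false, ∑ b ∈ sgrp grp true,
            ker α (Function.update F i x a) (Function.update F i x b)
          = (∑ m ∈ sgrp grp (!false), ker α x (F m))
            + ∑ a ∈ (sgrp grp false).erase i, ∑ b ∈ sgrp grp true, ker α (F a) (F b) := by
        rw [← Finset.add_sum_erase _ _ hi]
        congr 1
        · simp only [Bool.not_false]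
          refine Finset.sum_congr rfl fun b hbm => ?_
          rw [Function.update_self, Function.update_of_ne (hne1 b hbm)]
        · refine Finset.sum_congr rfl fun a ha => ?_
          refine Finset.sum_congr rfl fun b hbm => ?_
          rw [Function.update_of_ne (Finset.mem_erase.mp ha).1,
            Function.update_of_ne (hne1 b hbm)]
      simp only [hTilde, hsum, mul_add]
    | true =>
      refine ⟨-(2 / (((sgrp grp false).card : ℝ) * ((sgrp grp true).card : ℝ)))
        * ∑ a ∈ sgrp grp false, ∑ b ∈ (sgrp grp true).erase i, ker α (F a) (F b), ?_⟩
      intro x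
      have hi : i ∈ sgrp grp true := by simp [sgrp, hb]
      have hne0 : ∀ a ∈ sgrp grp false, a ≠ i := by
        intro a ham h; rw [h] at ham; simp [sgrp, hb] at ham
      have hsum : ∑ a ∈ sgrp grp false, ∑ b ∈ sgrp grp true,
            ker α (Function.update F i x a) (Function.update F i x b)
          = (∑ m ∈ sgrp grp (!true), ker α x (F m))
            + ∑ a ∈ sgrp grp false, ∑ b ∈ (sgrp grp true).erase i, ker α (F a) (F b) := by
        have step : ∀ a ∈ sgrp grp false, ∑ b ∈ sgrp grp true,
              ker α (Function.update F i x a) (Function.update F i x b)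
            = ker α x (F a) + ∑ b ∈ (sgrp grp true).erase i, ker α (F a) (F b) := by
          intro a ham
          rw [← Finset.add_sum_erase _ _ hi]
          congr 1
          · rw [Function.update_of_ne (hne0 a ham), Function.update_self, ker_symm]
          · refine Finset.sum_congr rfl fun b hbm => ?_
            rw [Function.update_of_ne (hne0 a ham),
              Function.update_of_ne (Finset.mem_erase.mp hbm).1]
        rw [Finset.sum_congr rfl step, Finset.sum_add_distrib]
        simp only [Bool.not_true]
      simp only [hTilde, hsum, mul_add]
  have H := hasGradientAt_const_mul_add
    (-(2 / (((sgrp grp false).card : ℝ) * ((sgrp grp true).card : ℝ)))) K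
    (hasGradientAt_ker_sum (sgrp grp (!grp i)) α F (F i))
  have hfun : (fun x : EuclideanSpace ℝ (Fin d) => hTilde α grp (Function.update F i x))
      = fun x => -(2 / (((sgrp grp false).card : ℝ) * ((sgrp grp true).card : ℝ)))
          * (∑ m ∈ sgrp grp (!grp i), ker α x (F m)) + K := funext hK
  rw [hfun]
  convert H using 1
  -- now a pure algebraic identity on vectors
  have hset : (Finset.univ.erase i).filter (fun m => ¬ grp i = grp m) = sgrp grp (!grp i) := by
    ext m
    by_cases h : grp m = !grp i
    · have h2 : ¬ grp i = grp m := by cases hgi : grp i <;> simp_all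
      have h3 : m ≠ i := fun he => h2 (by rw [he])
      simp [sgrp, h, h2, h3]
    · have h2 : grp i = grp m := by cases hgi : grp i <;> cases hgm : grp m <;> simp_all
      simp [sgrp, h, h2]
  have hdiag : ∑ m ∈ Finset.univ.erase i, Ptoff α grp F i m
      = ∑ m ∈ sgrp grp (!grp i),
          ker α (F i) (F m) / (((sgrp grp false).card : ℝ) * ((sgrp grp true).card : ℝ)) := by
    rw [← hset, Finset.sum_filter]
    refine Finset.sum_congr rfl fun m _ => ?_
    by_cases h : grp i = grp m <;> simp [Ptoff, h]
  have hoff : ∑ j ∈ Finset.univ.erase i, Ptmat α grp F i j • F j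
      = ∑ m ∈ sgrp grp (!grp i),
          (ker α (F i) (F m) / (((sgrp grp false).card : ℝ) * ((sgrp grp true).card : ℝ))) • F m := by
    rw [← hset, Finset.sum_filter]
    refine Finset.sum_congr rfl fun m hm => ?_
    have hmi : ¬ i = m := fun h => (Finset.mem_erase.mp hm).1 h.symm
    by_cases h : grp i = grp m <;> simp [Ptmat, Ptoff, hmi, h]
  have hsplit : ∑ j : V, Ptmat α grp F i j • F j
      = ∑ m ∈ sgrp grp (!grp i),
          ((-(ker α (F i) (F m) / (((sgrp grp false).card : ℝ) * ((sgrp grp true).card : ℝ)))) • F i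
            + (ker α (F i) (F m) / (((sgrp grp false).card : ℝ) * ((sgrp grp true).card : ℝ))) • F m) := by
    rw [← Finset.add_sum_erase _ _ (Finset.mem_univ i), hoff, Finset.sum_add_distrib]
    congr 1
    simp only [Ptmat, if_pos rfl, hdiag, if_true, neg_smul, ← Finset.sum_smul, Finset.sum_neg_distrib]
  rw [hsplit, Finset.smul_sum, Finset.smul_sum, ← Finset.sum_neg_distrib]
  refine Finset.sum_congr rfl fun m _ => ?_
  module
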